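/- Let V: ℝⁿ → ℝ be nonnegative and measurable, and suppose that for every λ > 0 the measure of {x ∈ B(a,1) : V(x) < λ} tends to 0 as |a| → ∞. Then for every f ∈ L²(ℝⁿ), ∫ |f(x)|² /(1+V(x+a)) dx → 0 as |a| → ∞. -/

import Mathlib

open MeasureTheory Filter Metric
open scoped ENNReal

section Aux

variable {n : ℕ}

local notation "E" => EuclideanSpace ℝ (Fin n)

lemma aux_tendsto_add_const_cobounded (c : EuclideanSpace ℝ (Fin n)) :
    Tendsto (fun a : EuclideanSpace ℝ (Fin n) => a + c)
      (Bornology.cobounded (EuclideanSpace ℝ (Fin n)))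
      (Bornology.cobounded (EuclideanSpace ℝ (Fin n))) := by
  rw [← tendsto_norm_atTop_iff_cobounded]
  have h1 : Tendsto (fun a : EuclideanSpace ℝ (Fin n) => ‖a‖ - ‖c‖) (Bornology.cobounded (EuclideanSpace ℝ (Fin n))) atTop :=
    (tendsto_atTop_add_const_right _ (-‖c‖) tendsto_norm_cobounded_atTop).congr
      (fun a => by ring)
  refine tendsto_atTop_mono (fun a => ?_) h1
  have h2 : ‖a‖ ≤ ‖a + c‖ + ‖c‖ := by
    simpa [add_neg_cancel_right] using norm_add_le (a + c) (-c)
  linarith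

/-- The hypothesis for radius 1 implies the analogous statement for any radius. -/
lemma aux_ball_R (V : EuclideanSpace ℝ (Fin n) → ℝ)
    (h : ∀ lam : ℝ, 0 < lam →
      Tendsto (fun a => volume {x ∈ closedBall a 1 | V x < lam})
        (Bornology.cobounded (EuclideanSpace ℝ (Fin n))) (nhds 0))
    (lam : ℝ) (hlam : 0 < lam) (R : ℝ) :
    Tendsto (fun a : EuclideanSpace ℝ (Fin n) =>
        volume {x ∈ closedBall a R | V x < lam})
      (Bornology.cobounded (EuclideanSpace ℝ (Fin n))) (nhds 0) := by
  -- cover closedBall 0 R by finitely many balls of radius 1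
  obtain ⟨T, hT⟩ : ∃ T : Finset E, closedBall (0 : EuclideanSpace ℝ (Fin n)) R ⊆ ⋃ c ∈ T, ball c 1 := by
    have hc : IsCompact (closedBall (0 : EuclideanSpace ℝ (Fin n)) R) := isCompact_closedBall _ _
    obtain ⟨T, hT⟩ := hc.elim_finite_subcover (fun c : EuclideanSpace ℝ (Fin n) => ball c 1)
      (fun c => isOpen_ball) (fun x _ => Set.mem_iUnion.2 ⟨x, mem_ball_self one_pos⟩)
    exact ⟨T, hT⟩
  have hsub : ∀ a : EuclideanSpace ℝ (Fin n), {x ∈ closedBall a R | V x < lam} ⊆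
      ⋃ c ∈ T, {x ∈ closedBall (a + c) 1 | V x < lam} := by
    intro a x hx
    have hx1 : x - a ∈ closedBall (0 : EuclideanSpace ℝ (Fin n)) R := by
      simpa [Metric.mem_closedBall, dist_eq_norm] using hx.1
    obtain ⟨c, hcT, hc⟩ := Set.mem_iUnion₂.1 (hT hx1)
    refine Set.mem_iUnion₂.2 ⟨c, hcT, ?_, hx.2⟩
    have : dist (x - a) c < 1 := hc
    rw [Metric.mem_closedBall]
    have : dist x (a + c) = dist (x - a) c := by
      simp [dist_eq_norm]
      congr 1
      abel
    rw [this]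
    exact le_of_lt hc
  have hle : ∀ a : EuclideanSpace ℝ (Fin n), volume {x ∈ closedBall a R | V x < lam} ≤
      ∑ c ∈ T, volume {x ∈ closedBall (a + c) 1 | V x < lam} := fun a =>
    le_trans (measure_mono (hsub a)) (measure_biUnion_finset_le _ _)
  have hsum : Tendsto (fun a : EuclideanSpace ℝ (Fin n) =>
      ∑ c ∈ T, volume {x ∈ closedBall (a + c) 1 | V x < lam})
      (Bornology.cobounded (EuclideanSpace ℝ (Fin n))) (nhds 0) := by
    have := tendsto_finset_sum T (fun c _ =>
      (h lam hlam).comp (aux_tendsto_add_const_cobounded c))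
    simpa using this
  exact tendsto_of_tendsto_of_tendsto_of_le_of_le tendsto_const_nhds hsum
    (fun a => zero_le) hle

end Aux

/-- If `V ≥ 0` is measurable and for every `λ > 0` the measure of
`{x ∈ B(a,1) : V(x) < λ}` tends to `0` as `|a| → ∞`, then for every `f ∈ L²(ℝⁿ)`,
`∫ |f(x)|²/(1+V(x+a)) dx → 0` as `|a| → ∞`. -/
theorem stmt14 (n : ℕ) (V : EuclideanSpace ℝ (Fin n) → ℝ) (hmeas : Measurable V)
    (hV : ∀ x, 0 ≤ V x)
    (h : ∀ lam : ℝ, 0 < lam →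
      Tendsto (fun a => volume {x ∈ closedBall a 1 | V x < lam})
        (Bornology.cobounded (EuclideanSpace ℝ (Fin n))) (nhds 0)) :
    ∀ f : EuclideanSpace ℝ (Fin n) → ℂ, MemLp f 2 volume →
      Tendsto (fun a => ∫ x, ‖f x‖ ^ 2 / (1 + V (x + a)))
        (Bornology.cobounded (EuclideanSpace ℝ (Fin n))) (nhds 0) := by
  intro f hf
  -- g = ‖f‖² is integrable
  have hg : Integrable (fun x : EuclideanSpace ℝ (Fin n) => ‖f x‖ ^ 2) volume := by
    have h2 := hf.integrable_norm_rpow (by norm_num) (by norm_num)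
    refine h2.congr (Eventually.of_forall fun x => ?_)
    show ‖f x‖ ^ ((2 : ℝ≥0∞)).toReal = ‖f x‖ ^ (2 : ℕ)
    rw [show ((2 : ℝ≥0∞)).toReal = ((2 : ℕ) : ℝ) by norm_num, Real.rpow_natCast]
  set G : EuclideanSpace ℝ (Fin n) → ℝ≥0∞ := fun x => ENNReal.ofReal (‖f x‖ ^ 2) with hG
  have hGmeas : AEMeasurable G volume :=
    (hf.1.norm.aemeasurable.pow aemeasurable_const).ennreal_ofReal
  have hGtot : ∫⁻ x, G x ≠ ⊤ := hg.lintegral_lt_top.ne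
  set F : EuclideanSpace ℝ (Fin n) → ℝ≥0∞ := fun a => ∫⁻ x, G x / ENNReal.ofReal (1 + V (x + a)) with hF
  -- key ENNReal statement
  have key : Tendsto F (Bornology.cobounded (EuclideanSpace ℝ (Fin n))) (nhds 0) := by
    rw [ENNReal.tendsto_nhds_zero]
    intro ε hε
    -- replace ε by min ε 1
    set δε : ℝ≥0∞ := min ε 1 with hδε
    have hδε0 : δε ≠ 0 := (lt_min hε zero_lt_one).ne'
    have hδεtop : δε ≠ ⊤ :=
      (lt_of_le_of_lt (min_le_right _ _) ENNReal.one_lt_top).ne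
    have hδεle : δε ≤ ε := min_le_left _ _
    have hδ3 : δε / 3 ≠ 0 := by
      simp [ENNReal.div_eq_zero_iff, hδε0]
    have hδ3' : (0 : ℝ≥0∞) < δε / 3 := pos_iff_ne_zero.2 hδ3
    -- choose lam
    obtain ⟨m, hm⟩ : ∃ m : ℕ, (∫⁻ x, G x) / (δε / 3) < m :=
      ENNReal.exists_nat_gt (ENNReal.div_lt_top hGtot hδ3).ne
    set lam : ℝ := (m : ℝ) + 1 with hlamdef
    have hlam : 0 < lam := by positivity
    set c : ℝ≥0∞ := ENNReal.ofReal (1 + lam) with hc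
    have hc1 : 1 ≤ c := by
      rw [hc, ← ENNReal.ofReal_one]
      exact ENNReal.ofReal_le_ofReal (by linarith)
    have hc0 : c ≠ 0 := by
      intro h0; rw [h0] at hc1; exact absurd hc1 (by simp)
    have hctop : c ≠ ⊤ := ENNReal.ofReal_ne_top
    have hIc : (∫⁻ x, G x) * c⁻¹ ≤ δε / 3 := by
      have h1 : (∫⁻ x, G x) ≤ (δε / 3) * c := by
        have h2 : (∫⁻ x, G x) = (∫⁻ x, G x) / (δε / 3) * (δε / 3) :=
          (ENNReal.div_mul_cancel hδ3 (ENNReal.div_lt_top hδεtop (by norm_num)).ne).symm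
        calc (∫⁻ x, G x) = (∫⁻ x, G x) / (δε / 3) * (δε / 3) := h2
          _ ≤ (m : ℝ≥0∞) * (δε / 3) := mul_le_mul_left hm.le _
          _ ≤ c * (δε / 3) := by
              refine mul_le_mul_left ?_ _
              rw [hc, hlamdef]
              calc (m : ℝ≥0∞) = ENNReal.ofReal (m : ℝ) := by
                    simp [ENNReal.ofReal_natCast]
                _ ≤ ENNReal.ofReal (1 + ((m : ℝ) + 1)) :=
                    ENNReal.ofReal_le_ofReal (by linarith)
          _ = (δε / 3) * c := mul_comm _ _
      calc (∫⁻ x, G x) * c⁻¹ ≤ (δε / 3) * c * c⁻¹ := mul_le_mul_left h1 _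
        _ = δε / 3 := by
            rw [mul_assoc, ENNReal.mul_inv_cancel hc0 hctop, mul_one]
    -- choose δ for absolute continuity
    obtain ⟨δ, hδpos, hδ⟩ := exists_pos_setLIntegral_lt_of_measure_lt
      (μ := volume) (f := G) hGtot hδ3
    -- choose R for the tail
    obtain ⟨R, hR⟩ : ∃ R : ℕ, ∫⁻ x in (closedBall (0 : EuclideanSpace ℝ (Fin n)) R)ᶜ, G x ≤ δε / 3 := by
      have htot : (⨆ k : ℕ, ∫⁻ x in closedBall (0 : EuclideanSpace ℝ (Fin n)) k, G x) = ∫⁻ x, G x := by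
        rw [← setLIntegral_iUnion_of_directed G
          (Monotone.directed_le (fun i j hij =>
            closedBall_subset_closedBall (by exact_mod_cast hij))),
          iUnion_closedBall_nat, Measure.restrict_univ]
      have hsuff : ∃ R : ℕ, ∫⁻ x, G x ≤ (∫⁻ x in closedBall (0 : EuclideanSpace ℝ (Fin n)) R, G x) + δε / 3 := by
        by_cases hcase : ∫⁻ x, G x ≤ δε / 3
        · exact ⟨0, le_trans hcase (le_add_self)⟩
        · push_neg at hcase
          have hlt : (∫⁻ x, G x) - δε / 3 < ⨆ k : ℕ, ∫⁻ x in closedBall (0 : EuclideanSpace ℝ (Fin n)) k, G x := by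
            rw [htot]
            exact ENNReal.sub_lt_self hGtot
              (by intro h0; rw [h0] at hcase; exact absurd hcase (by simp)) hδ3
          obtain ⟨R, hR⟩ := lt_iSup_iff.1 hlt
          refine ⟨R, ?_⟩
          have := tsub_add_cancel_of_le hcase.le
          calc (∫⁻ x, G x) = (∫⁻ x, G x) - δε / 3 + δε / 3 := this.symm
            _ ≤ (∫⁻ x in closedBall (0 : EuclideanSpace ℝ (Fin n)) R, G x) + δε / 3 := add_le_add_left hR.le _
      obtain ⟨R, hR⟩ := hsuff
      refine ⟨R, ?_⟩
      rw [setLIntegral_compl measurableSet_closedBall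
        (ne_top_of_le_ne_top hGtot (setLIntegral_le_lintegral _ _))]
      exact tsub_le_iff_left.2 hR
    -- eventually the measure of the bad set is small
    have hev : ∀ᶠ a : EuclideanSpace ℝ (Fin n) in Bornology.cobounded (EuclideanSpace ℝ (Fin n)),
        volume {x ∈ closedBall a (R : ℝ) | V x < lam} < δ :=
      (aux_ball_R V h lam hlam R).eventually_lt_const hδpos
    filter_upwards [hev] with a ha
    -- the bad set, translated
    set S : Set (EuclideanSpace ℝ (Fin n)) := {x | V (x + a) < lam} with hS
    have hSmeas : MeasurableSet S :=
      (hmeas.comp (measurable_add_const a)) measurableSet_Iio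
    have htrans : S ∩ closedBall (0 : EuclideanSpace ℝ (Fin n)) R =
        (fun x : EuclideanSpace ℝ (Fin n) => x + a) ⁻¹' {y ∈ closedBall a (R : ℝ) | V y < lam} := by
      ext x
      simp only [Set.mem_inter_iff, Set.mem_preimage, Set.mem_setOf_eq, hS,
        Metric.mem_closedBall, dist_eq_norm]
      constructor
      · rintro ⟨hVx, hx⟩
        refine ⟨?_, hVx⟩
        simpa using hx
      · rintro ⟨hx, hVx⟩
        refine ⟨hVx, ?_⟩
        simpa using hx
    have hmeastrans : volume (S ∩ closedBall (0 : EuclideanSpace ℝ (Fin n)) R) < δ := by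
      rw [htrans, measure_preimage_add_right]
      exact ha
    -- now estimate F a
    have hsplit : F a = (∫⁻ x in S, G x / ENNReal.ofReal (1 + V (x + a))) +
        ∫⁻ x in Sᶜ, G x / ENNReal.ofReal (1 + V (x + a)) :=
      (lintegral_add_compl _ hSmeas).symm
    have hbound1 : (∫⁻ x in S, G x / ENNReal.ofReal (1 + V (x + a))) ≤ δε / 3 + δε / 3 := by
      have hstep1 : (∫⁻ x in S, G x / ENNReal.ofReal (1 + V (x + a))) ≤ ∫⁻ x in S, G x := by
        refine lintegral_mono fun x => ?_
        calc G x / ENNReal.ofReal (1 + V (x + a)) ≤ G x / 1 := by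
              refine ENNReal.div_le_div_left ?_ _
              rw [← ENNReal.ofReal_one]
              exact ENNReal.ofReal_le_ofReal (by linarith [hV (x + a)])
          _ = G x := by simp
      have hstep2 : (∫⁻ x in S, G x) ≤
          (∫⁻ x in S ∩ closedBall (0 : EuclideanSpace ℝ (Fin n)) R, G x) + ∫⁻ x in (closedBall (0 : EuclideanSpace ℝ (Fin n)) R)ᶜ, G x := by
        calc (∫⁻ x in S, G x) ≤
            ∫⁻ x in (S ∩ closedBall (0 : EuclideanSpace ℝ (Fin n)) R) ∪ (closedBall (0 : EuclideanSpace ℝ (Fin n)) R)ᶜ, G x := by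
              refine lintegral_mono_set fun x hx => ?_
              by_cases hxB : x ∈ closedBall (0 : EuclideanSpace ℝ (Fin n)) R
              · exact Or.inl ⟨hx, hxB⟩
              · exact Or.inr hxB
          _ ≤ _ := lintegral_union_le _ _ _
      have hstep3 : (∫⁻ x in S ∩ closedBall (0 : EuclideanSpace ℝ (Fin n)) R, G x) < δε / 3 :=
        hδ _ hmeastrans
      exact le_trans hstep1 (le_trans hstep2 (add_le_add hstep3.le hR))
    have hbound2 : (∫⁻ x in Sᶜ, G x / ENNReal.ofReal (1 + V (x + a))) ≤ δε / 3 := by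
      have hstep1 : (∫⁻ x in Sᶜ, G x / ENNReal.ofReal (1 + V (x + a))) ≤
          ∫⁻ x, G x * c⁻¹ := by
        calc (∫⁻ x in Sᶜ, G x / ENNReal.ofReal (1 + V (x + a))) ≤
            ∫⁻ x in Sᶜ, G x * c⁻¹ := by
              refine setLIntegral_mono_ae (hGmeas.restrict.mul_const _)
                (Eventually.of_forall fun x hx => ?_)
              have hxS : ¬ V (x + a) < lam := hx
              push_neg at hxS
              rw [div_eq_mul_inv]
              refine mul_le_mul_right (ENNReal.inv_le_inv.2 ?_) _
              rw [hc]
              exact ENNReal.ofReal_le_ofReal (by linarith)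
          _ ≤ ∫⁻ x, G x * c⁻¹ := setLIntegral_le_lintegral _ _
      have hstep2 : (∫⁻ x, G x * c⁻¹) = (∫⁻ x, G x) * c⁻¹ :=
        lintegral_mul_const' _ _ (by simp [ENNReal.inv_ne_top, hc0])
      calc (∫⁻ x in Sᶜ, G x / ENNReal.ofReal (1 + V (x + a))) ≤ (∫⁻ x, G x) * c⁻¹ := by
            rw [← hstep2]; exact hstep1
        _ ≤ δε / 3 := hIc
    calc F a ≤ (δε / 3 + δε / 3) + δε / 3 := by
          rw [hsplit]; exact add_le_add hbound1 hbound2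
      _ = δε := ENNReal.add_thirds δε
      _ ≤ ε := hδεle
  -- convert back to the real integral
  have hcongr : ∀ a : EuclideanSpace ℝ (Fin n), ∫ x, ‖f x‖ ^ 2 / (1 + V (x + a)) = (F a).toReal := by
    intro a
    have hpos : ∀ x : EuclideanSpace ℝ (Fin n), (0 : ℝ) < 1 + V (x + a) := fun x => by linarith [hV (x + a)]
    have hnonneg : 0 ≤ᵐ[volume] fun x : EuclideanSpace ℝ (Fin n) => ‖f x‖ ^ 2 / (1 + V (x + a)) :=
      Eventually.of_forall fun x => div_nonneg (by positivity) (hpos x).le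
    have haesm : AEStronglyMeasurable (fun x : EuclideanSpace ℝ (Fin n) => ‖f x‖ ^ 2 / (1 + V (x + a))) volume := by
      have h1 : AEStronglyMeasurable (fun x : EuclideanSpace ℝ (Fin n) => ‖f x‖ ^ 2) volume :=
        hf.1.norm.pow 2
      have h2 : AEStronglyMeasurable
          (fun x : EuclideanSpace ℝ (Fin n) => (1 + V (x + a))⁻¹) volume :=
        ((measurable_const.add (hmeas.comp (measurable_add_const a))).inv).aestronglyMeasurable
      simpa [div_eq_mul_inv, Pi.mul_def] using h1.mul h2
    rw [integral_eq_lintegral_of_nonneg_ae hnonneg haesm]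
    congr 1
    refine lintegral_congr fun x => ?_
    exact ENNReal.ofReal_div_of_pos (hpos x)
  have htoReal : Tendsto (fun a => (F a).toReal) (Bornology.cobounded (EuclideanSpace ℝ (Fin n))) (nhds 0) := by
    have := (ENNReal.tendsto_toReal (a := 0) (by simp)).comp key
    simpa [Function.comp_def] using this
  exact htoReal.congr fun a => (hcongr a).symm
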